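/- arXiv:2402.14113 — 2 statements merged into one kernel-verified Lean document; each statement's English description precedes it below -/
import Mathlib

section
/- For every integer k ≥ 1 there exists n₀ such that for every n ≥ n₀, every saturated k-Sperner system F ⊆ P([n]) satisfies |F| ≥ 2^{(k−1)/2} (i.e., |F| ≥ 2^{k/2 − 0.5}). -/
open Finset

/-- A family contains a chain of `m` sets `C 0 ⊊ C 1 ⊊ ⋯ ⊊ C (m-1)`. -/
def HasChainOfLen {α : Type*} [DecidableEq α] (F : Finset (Finset α)) (m : ℕ) : Prop :=
  ∃ C : Fin m → Finset α, StrictMono C ∧ ∀ i, C i ∈ F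

/-- `F ⊆ P(X)` is a saturated `k`-Sperner system: it has no chain of `k+1` sets,
and adding any `S ⊆ X` with `S ∉ F` creates a chain of `k+1` sets. -/
def IsSatKSperner {α : Type*} [DecidableEq α] (X : Finset α) (F : Finset (Finset α))
    (k : ℕ) : Prop :=
  (∀ A ∈ F, A ⊆ X) ∧ ¬ HasChainOfLen F (k + 1) ∧
    ∀ S ⊆ X, S ∉ F → HasChainOfLen (insert S F) (k + 1)

/-- `H` is a homogeneous atom for `F` in `P(X)`: `H ⊆ X` is maximal with the property
that every member of `F` contains all of `H` or none of it, and `|H| ≥ 2`. -/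
def IsHomogAtom {α : Type*} [DecidableEq α] (X : Finset α) (F : Finset (Finset α))
    (H : Finset α) : Prop :=
  H ⊆ X ∧ (∀ S ∈ F, S ∩ H = ∅ ∨ S ∩ H = H) ∧
    (∀ B ⊆ X, (∀ S ∈ F, S ∩ B = ∅ ∨ S ∩ B = B) → H ⊆ B → H = B) ∧
    2 ≤ H.card

/-- The small members of `F` (those disjoint from the homogeneous atom `H`). -/
def smallSets {α : Type*} [DecidableEq α] (F : Finset (Finset α)) (H : Finset α) :
    Finset (Finset α) :=
  F.filter fun S => S ∩ H = ∅

/-- The large members of `F` (those containing the homogeneous atom `H`). -/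
def largeSets {α : Type*} [DecidableEq α] (F : Finset (Finset α)) (H : Finset α) :
    Finset (Finset α) :=
  F.filter fun S => H ⊆ S

/-- The minimal elements (under inclusion) of a family of sets. -/
def minimalsIn {α : Type*} [DecidableEq α] (G : Finset (Finset α)) : Finset (Finset α) :=
  G.filter fun A => ∀ B ∈ G, B ⊆ A → B = A

/-- What remains of `F` after stripping off minimal elements `i` times. -/
def canonRest {α : Type*} [DecidableEq α] (F : Finset (Finset α)) : ℕ → Finset (Finset α)
  | 0 => F
  | i + 1 => canonRest F i \ minimalsIn (canonRest F i)

/-- The canonical decomposition of `F` into antichains: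
`canonDecomp F i` is the family of minimal elements of `F \ ⋃_{j<i} canonDecomp F j`. -/
def canonDecomp {α : Type*} [DecidableEq α] (F : Finset (Finset α)) (i : ℕ) :
    Finset (Finset α) :=
  minimalsIn (canonRest F i)

/-- A sequence `(D i)_{i=0}^t` of families is layered if for `1 ≤ i ≤ t`,
every member of `D i` strictly contains some member of `D (i-1)`. -/
def Layered {α : Type*} [DecidableEq α] (D : ℕ → Finset (Finset α)) (t : ℕ) : Prop :=
  ∀ i, 1 ≤ i → i ≤ t → ∀ A ∈ D i, ∃ B ∈ D (i - 1), B ⊂ A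

section Chains
open scoped Classical

/-- chain of `m` members of `G`, all `⊆ T`. -/
def ChB (G : Finset (Finset ℕ)) (T : Finset ℕ) (m : ℕ) : Prop :=
  ∃ C : Fin m → Finset ℕ, StrictMono C ∧ (∀ j, C j ∈ G) ∧ ∀ j, C j ⊆ T

/-- chain of `m` members of `G`, all `⊇ T`. -/
def ChA (G : Finset (Finset ℕ)) (T : Finset ℕ) (m : ℕ) : Prop :=
  ∃ C : Fin m → Finset ℕ, StrictMono C ∧ (∀ j, C j ∈ G) ∧ ∀ j, T ⊆ C j

lemma chB_zero (G : Finset (Finset ℕ)) (T : Finset ℕ) : ChB G T 0 :=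
  ⟨fun j => j.elim0, fun j => j.elim0, fun j => j.elim0, fun j => j.elim0⟩

lemma chA_zero (G : Finset (Finset ℕ)) (T : Finset ℕ) : ChA G T 0 :=
  ⟨fun j => j.elim0, fun j => j.elim0, fun j => j.elim0, fun j => j.elim0⟩

lemma chB_le_card {G T m} (h : ChB G T m) : m ≤ G.card := by
  obtain ⟨C, hm, hg, -⟩ := h
  have := Finset.card_le_card_of_injOn (s := (Finset.univ : Finset (Fin m))) C
    (fun j _ => hg j) (hm.injective.injOn)
  simpa using this

lemma chA_le_card {G T m} (h : ChA G T m) : m ≤ G.card := by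
  obtain ⟨C, hm, hg, -⟩ := h
  have := Finset.card_le_card_of_injOn (s := (Finset.univ : Finset (Fin m))) C
    (fun j _ => hg j) (hm.injective.injOn)
  simpa using this

noncomputable def hB (G : Finset (Finset ℕ)) (A : Finset ℕ) : ℕ :=
  Nat.findGreatest (ChB G A) G.card

noncomputable def hA (G : Finset (Finset ℕ)) (B : Finset ℕ) : ℕ :=
  Nat.findGreatest (ChA G B) G.card

lemma le_hB {G A m} (h : ChB G A m) : m ≤ hB G A :=
  Nat.le_findGreatest (chB_le_card h) h

lemma le_hA {G B m} (h : ChA G B m) : m ≤ hA G B :=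
  Nat.le_findGreatest (chA_le_card h) h

lemma hB_spec (G : Finset (Finset ℕ)) (A : Finset ℕ) : ChB G A (hB G A) :=
  Nat.findGreatest_spec (Nat.zero_le _) (chB_zero G A)

lemma hA_spec (G : Finset (Finset ℕ)) (B : Finset ℕ) : ChA G B (hA G B) :=
  Nat.findGreatest_spec (Nat.zero_le _) (chA_zero G B)

lemma card_ge_of_strictMono {m : ℕ} {C : Fin m → Finset ℕ} (h : StrictMono C) :
    ∀ r : ℕ, ∀ hr : r < m, r ≤ (C ⟨r, hr⟩).card := by
  intro r
  induction r with
  | zero => intro _; exact Nat.zero_le _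
  | succ s ih =>
    intro hr
    have h1 : s < m := by omega
    have h2 : C ⟨s, h1⟩ ⊂ C ⟨s + 1, hr⟩ := h (by simp [Fin.mk_lt_mk])
    have h3 := Finset.card_lt_card h2
    have h4 := ih h1
    omega

lemma card_ge_of_strictMono' {m : ℕ} {C : Fin m → Finset ℕ} (h : StrictMono C) (h0 : 0 < m) :
    ∀ r : ℕ, ∀ hr : r < m, (C ⟨0, h0⟩).card + r ≤ (C ⟨r, hr⟩).card := by
  intro r
  induction r with
  | zero => intro _; simp
  | succ s ih =>
    intro hr
    have h1 : s < m := by omega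
    have h2 : C ⟨s, h1⟩ ⊂ C ⟨s + 1, hr⟩ := h (by simp [Fin.mk_lt_mk])
    have h3 := Finset.card_lt_card h2
    have h4 := ih h1
    omega

lemma extract_below {G : Finset (Finset ℕ)} {T : Finset ℕ} {i : ℕ} (hi : 1 ≤ i)
    (h : ChB G T i) : ∃ A ∈ G, A ⊆ T ∧ hB G A = i := by
  have hne : (G.filter (fun A => A ⊆ T ∧ i ≤ hB G A)).Nonempty := by
    obtain ⟨C, h1, h2, h3⟩ := h
    have hto : ChB G (C ⟨i - 1, by omega⟩) i := by
      refine ⟨C, h1, h2, fun q => ?_⟩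
      have : q ≤ (⟨i - 1, by omega⟩ : Fin i) := by
        simp only [Fin.le_def]; omega
      exact Finset.le_iff_subset.mp (h1.monotone this)
    exact ⟨C ⟨i - 1, by omega⟩, mem_filter.mpr ⟨h2 _, h3 _, le_hB hto⟩⟩
  obtain ⟨A, hAmem, hAmin⟩ := Finset.exists_min_image _ (hB G) hne
  rw [mem_filter] at hAmem
  obtain ⟨hAG, hAT, hAi⟩ := hAmem
  refine ⟨A, hAG, hAT, ?_⟩
  by_contra hne'
  have hgt : i < hB G A := lt_of_le_of_ne hAi (Ne.symm hne')
  obtain ⟨D, hD1, hD2, hD3⟩ := hB_spec G A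
  have hi1g : i - 1 < hB G A := by omega
  -- A' := D ⟨i-1, hi1g⟩
  have hA'chain : ChB G (D ⟨i - 1, hi1g⟩) i := by
    refine ⟨fun q : Fin i => D ⟨(q : ℕ), by omega⟩, ?_, fun q => hD2 _, fun q => ?_⟩
    · intro a b hab
      have hab' : (a : ℕ) < (b : ℕ) := hab
      dsimp only
      apply hD1
      simp only [Fin.mk_lt_mk]
      omega
    · dsimp only
      have : (⟨(q : ℕ), by omega⟩ : Fin (hB G A)) ≤ ⟨i - 1, hi1g⟩ := by
        simp only [Fin.le_def]; omega
      exact Finset.le_iff_subset.mp (hD1.monotone this)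
  have hA'Cand : D ⟨i - 1, hi1g⟩ ∈ G.filter (fun A => A ⊆ T ∧ i ≤ hB G A) :=
    mem_filter.mpr ⟨hD2 _, (hD3 _).trans hAT, le_hB hA'chain⟩
  have hmin : hB G A ≤ hB G (D ⟨i - 1, hi1g⟩) := hAmin _ hA'Cand
  obtain ⟨E, hE1, hE2, hE3⟩ := hB_spec G (D ⟨i - 1, hi1g⟩)
  have hbig : ChB G A (hB G (D ⟨i - 1, hi1g⟩) + (hB G A - i)) := by
    refine ⟨fun r => if hr : (r : ℕ) < hB G (D ⟨i - 1, hi1g⟩) then E ⟨(r : ℕ), hr⟩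
        else D ⟨i + ((r : ℕ) - hB G (D ⟨i - 1, hi1g⟩)), by omega⟩, ?_, ?_, ?_⟩
    · intro r s hrs
      have hrs' : (r : ℕ) < (s : ℕ) := hrs
      dsimp only
      by_cases h1 : (r : ℕ) < hB G (D ⟨i - 1, hi1g⟩) <;>
        by_cases h2 : (s : ℕ) < hB G (D ⟨i - 1, hi1g⟩)
      · rw [dif_pos h1, dif_pos h2]
        apply hE1
        simp only [Fin.mk_lt_mk]
        omega
      · rw [dif_pos h1, dif_neg h2]
        refine lt_of_le_of_lt (Finset.le_iff_subset.mpr (hE3 ⟨(r : ℕ), h1⟩)) ?_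
        apply hD1
        simp only [Fin.mk_lt_mk]
        omega
      · omega
      · rw [dif_neg h1, dif_neg h2]
        apply hD1
        simp only [Fin.mk_lt_mk]
        omega
    · intro r
      dsimp only
      by_cases h1 : (r : ℕ) < hB G (D ⟨i - 1, hi1g⟩)
      · rw [dif_pos h1]; exact hE2 _
      · rw [dif_neg h1]; exact hD2 _
    · intro r
      dsimp only
      by_cases h1 : (r : ℕ) < hB G (D ⟨i - 1, hi1g⟩)
      · rw [dif_pos h1]; exact (hE3 _).trans (hD3 _)
      · rw [dif_neg h1]; exact hD3 _
  have := le_hB hbig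
  omega

lemma extract_above {G : Finset (Finset ℕ)} {T : Finset ℕ} {j : ℕ} (hj : 1 ≤ j)
    (h : ChA G T j) : ∃ B ∈ G, T ⊆ B ∧ hA G B = j := by
  have hne : (G.filter (fun B => T ⊆ B ∧ j ≤ hA G B)).Nonempty := by
    obtain ⟨C, h1, h2, h3⟩ := h
    have hto : ChA G (C ⟨0, by omega⟩) j := by
      refine ⟨C, h1, h2, fun q => ?_⟩
      have : (⟨0, by omega⟩ : Fin j) ≤ q := by
        simp only [Fin.le_def]; omega
      exact Finset.le_iff_subset.mp (h1.monotone this)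
    exact ⟨C ⟨0, by omega⟩, mem_filter.mpr ⟨h2 _, h3 _, le_hA hto⟩⟩
  obtain ⟨B, hBmem, hBmin⟩ := Finset.exists_min_image _ (hA G) hne
  rw [mem_filter] at hBmem
  obtain ⟨hBG, hBT, hBj⟩ := hBmem
  refine ⟨B, hBG, hBT, ?_⟩
  by_contra hne'
  have hgt : j < hA G B := lt_of_le_of_ne hBj (Ne.symm hne')
  obtain ⟨D, hD1, hD2, hD3⟩ := hA_spec G B
  have hgj : hA G B - j < hA G B := by omega
  -- B' := D ⟨hA G B - j, hgj⟩
  have hB'chain : ChA G (D ⟨hA G B - j, hgj⟩) j := by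
    refine ⟨fun q : Fin j => D ⟨hA G B - j + (q : ℕ), by omega⟩, ?_, fun q => hD2 _, fun q => ?_⟩
    · intro a b hab
      have hab' : (a : ℕ) < (b : ℕ) := hab
      dsimp only
      apply hD1
      simp only [Fin.mk_lt_mk]
      omega
    · dsimp only
      have : (⟨hA G B - j, hgj⟩ : Fin (hA G B)) ≤ ⟨hA G B - j + (q : ℕ), by omega⟩ := by
        simp only [Fin.le_def]; omega
      exact Finset.le_iff_subset.mp (hD1.monotone this)
  have hB'Cand : D ⟨hA G B - j, hgj⟩ ∈ G.filter (fun B' => T ⊆ B' ∧ j ≤ hA G B') :=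
    mem_filter.mpr ⟨hD2 _, hBT.trans (hD3 _), le_hA hB'chain⟩
  have hmin : hA G B ≤ hA G (D ⟨hA G B - j, hgj⟩) := hBmin _ hB'Cand
  obtain ⟨E, hE1, hE2, hE3⟩ := hA_spec G (D ⟨hA G B - j, hgj⟩)
  have hbig : ChA G B ((hA G B - j) + hA G (D ⟨hA G B - j, hgj⟩)) := by
    refine ⟨fun r => if hr : (r : ℕ) < hA G B - j then D ⟨(r : ℕ), by omega⟩
        else E ⟨(r : ℕ) - (hA G B - j), by omega⟩, ?_, ?_, ?_⟩
    · intro r s hrs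
      have hrs' : (r : ℕ) < (s : ℕ) := hrs
      dsimp only
      by_cases h1 : (r : ℕ) < hA G B - j <;> by_cases h2 : (s : ℕ) < hA G B - j
      · rw [dif_pos h1, dif_pos h2]
        apply hD1
        simp only [Fin.mk_lt_mk]
        omega
      · rw [dif_pos h1, dif_neg h2]
        refine lt_of_lt_of_le ?_ (Finset.le_iff_subset.mpr (hE3 ⟨(s : ℕ) - (hA G B - j), by omega⟩))
        apply hD1
        simp only [Fin.mk_lt_mk]
        omega
      · omega
      · rw [dif_neg h1, dif_neg h2]
        apply hE1
        simp only [Fin.mk_lt_mk]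
        omega
    · intro r
      dsimp only
      by_cases h1 : (r : ℕ) < hA G B - j
      · rw [dif_pos h1]; exact hD2 _
      · rw [dif_neg h1]; exact hE2 _
    · intro r
      dsimp only
      by_cases h1 : (r : ℕ) < hA G B - j
      · rw [dif_pos h1]; exact hD3 _
      · rw [dif_neg h1]
        exact (hD3 ⟨hA G B - j, hgj⟩).trans (hE3 _)
  have := le_hA hbig
  omega

lemma cover {k n : ℕ} {F : Finset (Finset ℕ)} (hsat : IsSatKSperner (Finset.Icc 1 n) F k)
    {a b : ℕ} (ha : a ∈ Finset.Icc 1 n) (hab : a ≠ b)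
    (htr : ∀ A ∈ F, (a ∈ A ↔ b ∈ A)) {i j : ℕ} (hi : 1 ≤ i) (hj : 1 ≤ j)
    (hij : i + j = k + 1) {T : Finset ℕ} (hT : T ⊆ Finset.Icc 1 n \ {a, b}) :
    (∃ A ∈ smallSets F {a, b}, A ⊆ T ∧ hB (smallSets F {a, b}) A = i) ∨
      (∃ B ∈ largeSets F {a, b}, T ⊆ B ∧ hA (largeSets F {a, b}) B = j) := by
  have haT : a ∉ T := fun hmem => by
    have := hT hmem
    rw [mem_sdiff] at this
    exact this.2 (by simp)
  have hbT : b ∉ T := fun hmem => by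
    have := hT hmem
    rw [mem_sdiff] at this
    exact this.2 (by simp)
  have hbS : b ∉ insert a T := by
    simp only [mem_insert]
    rintro (rfl | h)
    · exact hab rfl
    · exact hbT h
  have hSX : insert a T ⊆ Finset.Icc 1 n := by
    intro x hx
    rcases mem_insert.mp hx with rfl | hx
    · exact ha
    · exact (mem_sdiff.mp (hT hx)).1
  have hSF : insert a T ∉ F := fun hmem =>
    hbS ((htr _ hmem).mp (mem_insert_self a T))
  obtain ⟨C, hC, hCm⟩ := hsat.2.2 (insert a T) hSX hSF
  have hp : ∃ p : Fin (k + 1), C p = insert a T := by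
    by_contra hall
    push_neg at hall
    exact hsat.2.1 ⟨C, hC, fun p => (mem_insert.mp (hCm p)).resolve_left (hall p)⟩
  obtain ⟨p, hp⟩ := hp
  by_cases hip : i ≤ (p : ℕ)
  -- case: i sets below, use the small side
  · left
    have hch : ChB (smallSets F {a, b}) T i := by
      refine ⟨fun q : Fin i => C ⟨(q : ℕ), by omega⟩, ?_, ?_, ?_⟩
      · intro r s hrs
        have hrs' : (r : ℕ) < (s : ℕ) := hrs
        dsimp only
        apply hC
        simp only [Fin.mk_lt_mk]
        omega
      · intro q
        have hlt : (⟨(q : ℕ), by omega⟩ : Fin (k + 1)) < p := by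
          have : (q : ℕ) < i := q.isLt
          simp only [Fin.lt_def]
          omega
        have hss : C ⟨(q : ℕ), by omega⟩ ⊂ insert a T := hp ▸ hC hlt
        have hmemF : C ⟨(q : ℕ), by omega⟩ ∈ F := by
          refine (mem_insert.mp (hCm _)).resolve_left ?_
          intro heq
          rw [heq] at hss
          exact (ssubset_irrefl _) hss
        have hbC : b ∉ C ⟨(q : ℕ), by omega⟩ := fun hmem => hbS (hss.subset hmem)
        have haC : a ∉ C ⟨(q : ℕ), by omega⟩ := fun hmem => hbC ((htr _ hmemF).mp hmem)
        dsimp only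
        rw [smallSets, mem_filter]
        refine ⟨hmemF, ?_⟩
        rw [Finset.eq_empty_iff_forall_notMem]
        intro x hx
        rw [mem_inter, mem_insert, mem_singleton] at hx
        rcases hx.2 with rfl | rfl
        · exact haC hx.1
        · exact hbC hx.1
      · intro q
        have hlt : (⟨(q : ℕ), by omega⟩ : Fin (k + 1)) < p := by
          have : (q : ℕ) < i := q.isLt
          simp only [Fin.lt_def]
          omega
        have hss : C ⟨(q : ℕ), by omega⟩ ⊂ insert a T := hp ▸ hC hlt
        have hmemF : C ⟨(q : ℕ), by omega⟩ ∈ F := by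
          refine (mem_insert.mp (hCm _)).resolve_left ?_
          intro heq
          rw [heq] at hss
          exact (ssubset_irrefl _) hss
        have hbC : b ∉ C ⟨(q : ℕ), by omega⟩ := fun hmem => hbS (hss.subset hmem)
        have haC : a ∉ C ⟨(q : ℕ), by omega⟩ := fun hmem => hbC ((htr _ hmemF).mp hmem)
        dsimp only
        intro x hx
        rcases mem_insert.mp (hss.subset hx) with rfl | h
        · exact absurd hx haC
        · exact h
    exact extract_below hi hch
  -- case: j sets above, use the large side
  · right
    push_neg at hip
    have hch : ChA (largeSets F {a, b}) T j := by
      have hpk : (p : ℕ) + 1 + (j - 1) ≤ k := by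
        have := p.isLt
        omega
      refine ⟨fun r : Fin j => C ⟨(p : ℕ) + 1 + (r : ℕ), by omega⟩, ?_, ?_, ?_⟩
      · intro r s hrs
        have hrs' : (r : ℕ) < (s : ℕ) := hrs
        dsimp only
        apply hC
        simp only [Fin.mk_lt_mk]
        omega
      · intro r
        have hlt : p < (⟨(p : ℕ) + 1 + (r : ℕ), by omega⟩ : Fin (k + 1)) := by
          simp only [Fin.lt_def]
          omega
        have hss : insert a T ⊂ C ⟨(p : ℕ) + 1 + (r : ℕ), by omega⟩ := hp ▸ hC hlt
        have hmemF : C ⟨(p : ℕ) + 1 + (r : ℕ), by omega⟩ ∈ F := by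
          refine (mem_insert.mp (hCm _)).resolve_left ?_
          intro heq
          rw [heq] at hss
          exact (ssubset_irrefl _) hss
        have haC : a ∈ C ⟨(p : ℕ) + 1 + (r : ℕ), by omega⟩ :=
          hss.subset (mem_insert_self a T)
        have hbC : b ∈ C ⟨(p : ℕ) + 1 + (r : ℕ), by omega⟩ := (htr _ hmemF).mp haC
        dsimp only
        rw [largeSets, mem_filter]
        refine ⟨hmemF, ?_⟩
        intro x hx
        rw [mem_insert, mem_singleton] at hx
        rcases hx with rfl | rfl
        · exact haC
        · exact hbC
      · intro r
        have hlt : p < (⟨(p : ℕ) + 1 + (r : ℕ), by omega⟩ : Fin (k + 1)) := by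
          simp only [Fin.lt_def]
          omega
        have hss : insert a T ⊂ C ⟨(p : ℕ) + 1 + (r : ℕ), by omega⟩ := hp ▸ hC hlt
        dsimp only
        exact (subset_insert a T).trans hss.subset
    exact extract_above hj hch

-- (a) number of T with A ⊆ T ⊆ Y'
lemma card_filter_sup {A Y' : Finset ℕ} (hA : A ⊆ Y') :
    (Y'.powerset.filter fun T => A ⊆ T).card = 2 ^ (Y'.card - A.card) := by
  have : (Y'.powerset.filter fun T => A ⊆ T).card = ((Y' \ A).powerset).card := by
    refine Finset.card_bij' (fun T _ => T \ A) (fun S _ => S ∪ A) ?_ ?_ ?_ ?_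
    · intro T hT
      rw [mem_filter, mem_powerset] at hT
      rw [mem_powerset]
      exact sdiff_subset_sdiff hT.1 (Finset.Subset.refl _)
    · intro S hS
      rw [mem_powerset] at hS
      rw [mem_filter, mem_powerset]
      constructor
      · exact union_subset (hS.trans (sdiff_subset)) hA
      · exact subset_union_right
    · intro T hT
      rw [mem_filter, mem_powerset] at hT
      exact sdiff_union_of_subset hT.2
    · intro S hS
      rw [mem_powerset] at hS
      have hdisj : Disjoint S A := by
        refine Finset.disjoint_left.mpr fun x hx hxa => ?_
        exact (mem_sdiff.mp (hS hx)).2 hxa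
      rw [Finset.union_sdiff_distrib, Finset.sdiff_self, Finset.union_empty,
        Finset.sdiff_eq_self_of_disjoint hdisj]
  rw [this, card_powerset, card_sdiff_of_subset hA]

-- (b) number of T ⊆ Y' with T ⊆ B
lemma card_filter_sub (Y' B : Finset ℕ) :
    (Y'.powerset.filter fun T => T ⊆ B).card = 2 ^ ((Y' ∩ B).card) := by
  have : Y'.powerset.filter (fun T => T ⊆ B) = (Y' ∩ B).powerset := by
    ext T
    rw [mem_filter, mem_powerset, mem_powerset, subset_inter_iff]
  rw [this, card_powerset]

-- the per-level counting bound
lemma level_count {N i j xi yj : ℕ} (hi : 1 ≤ i) (hj : 1 ≤ j) (hiN : min i j - 1 ≤ N)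
    (hcount : 2 ^ N ≤ xi * 2 ^ (N - (i - 1)) + yj * 2 ^ (N - (j - 1))) :
    2 ^ (min i j - 1) ≤ xi + yj := by
  set μ := min i j with hμ
  have h1 : (2 : ℕ) ^ (N - (i - 1)) ≤ 2 ^ (N - (μ - 1)) :=
    Nat.pow_le_pow_right (by norm_num) (Nat.sub_le_sub_left (by omega) N)
  have h2 : (2 : ℕ) ^ (N - (j - 1)) ≤ 2 ^ (N - (μ - 1)) :=
    Nat.pow_le_pow_right (by norm_num) (Nat.sub_le_sub_left (by omega) N)
  have h3 : 2 ^ N ≤ (xi + yj) * 2 ^ (N - (μ - 1)) := by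
    calc 2 ^ N ≤ xi * 2 ^ (N - (i - 1)) + yj * 2 ^ (N - (j - 1)) := hcount
    _ ≤ xi * 2 ^ (N - (μ - 1)) + yj * 2 ^ (N - (μ - 1)) := by
        exact Nat.add_le_add (Nat.mul_le_mul_left _ h1) (Nat.mul_le_mul_left _ h2)
    _ = (xi + yj) * 2 ^ (N - (μ - 1)) := by ring
  have h4 : 2 ^ N = 2 ^ (μ - 1) * 2 ^ (N - (μ - 1)) := by
    rw [← pow_add]
    congr 1
    omega
  rw [h4] at h3
  exact Nat.le_of_mul_le_mul_right h3 (Nat.pow_pos (by norm_num))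

lemma main_level {k n : ℕ} {F : Finset (Finset ℕ)} (hsat : IsSatKSperner (Finset.Icc 1 n) F k)
    {a b : ℕ} (ha : a ∈ Finset.Icc 1 n) (hb : b ∈ Finset.Icc 1 n) (hab : a ≠ b)
    (htr : ∀ A ∈ F, (a ∈ A ↔ b ∈ A)) (hkn : k ≤ n - 1)
    {i j : ℕ} (hi : 1 ≤ i) (hj : 1 ≤ j) (hij : i + j = k + 1) :
    2 ^ (min i j - 1) ≤
      ((smallSets F {a, b}).filter fun A => hB (smallSets F {a, b}) A = i).card +
      ((largeSets F {a, b}).filter fun B => hA (largeSets F {a, b}) B = j).card := by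
  set H : Finset ℕ := {a, b} with hH
  set Y' : Finset ℕ := Finset.Icc 1 n \ H with hY'
  set Fs := smallSets F H with hFs
  set Fl := largeSets F H with hFl
  set Ai := Fs.filter (fun A => hB Fs A = i) with hAi
  set Bj := Fl.filter (fun B => hA Fl B = j) with hBj
  set N := Y'.card with hN
  have hHX : H ⊆ Finset.Icc 1 n := by
    intro x hx
    rw [hH, mem_insert, mem_singleton] at hx
    rcases hx with rfl | rfl
    · exact ha
    · exact hb
  have hHcard : H.card = 2 := by
    rw [hH, card_insert_of_notMem (by simp [hab]), card_singleton]
  have hNval : N = n - 2 := by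
    rw [hN, hY', card_sdiff_of_subset hHX, Nat.card_Icc, hHcard]
    omega
  have hn2 : 2 ≤ n := by
    have h1 : 1 ≤ a := (mem_Icc.mp ha).1
    have h2 : a ≤ n := (mem_Icc.mp ha).2
    have h3 : 1 ≤ b := (mem_Icc.mp hb).1
    have h4 : b ≤ n := (mem_Icc.mp hb).2
    omega
  -- covering of the powerset
  have hcov : Y'.powerset ⊆
      (Y'.powerset.filter fun T => ∃ A ∈ Ai, A ⊆ T) ∪
        (Y'.powerset.filter fun T => ∃ B ∈ Bj, T ⊆ B) := by
    intro T hT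
    rw [mem_powerset] at hT
    rcases cover hsat ha hab htr hi hj hij hT with ⟨A, hA1, hA2, hA3⟩ | ⟨B, hB1, hB2, hB3⟩
    · exact mem_union_left _ (mem_filter.mpr ⟨mem_powerset.mpr hT,
        ⟨A, mem_filter.mpr ⟨hA1, hA3⟩, hA2⟩⟩)
    · exact mem_union_right _ (mem_filter.mpr ⟨mem_powerset.mpr hT,
        ⟨B, mem_filter.mpr ⟨hB1, hB3⟩, hB2⟩⟩)
  have hstep1 : 2 ^ N ≤
      (Y'.powerset.filter fun T => ∃ A ∈ Ai, A ⊆ T).card +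
        (Y'.powerset.filter fun T => ∃ B ∈ Bj, T ⊆ B).card := by
    calc 2 ^ N = Y'.powerset.card := (card_powerset Y').symm
    _ ≤ _ := (card_le_card hcov).trans (card_union_le _ _)
  -- first filter bound
  have hsub1 : (Y'.powerset.filter fun T => ∃ A ∈ Ai, A ⊆ T) ⊆
      Ai.biUnion fun A => Y'.powerset.filter fun T => A ⊆ T := by
    intro T hT
    rw [mem_filter] at hT
    obtain ⟨A, hA1, hA2⟩ := hT.2
    exact mem_biUnion.mpr ⟨A, hA1, mem_filter.mpr ⟨hT.1, hA2⟩⟩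
  have hAiY : ∀ A ∈ Ai, A ⊆ Y' := by
    intro A hA
    have hA1 : A ∈ Fs ∧ hB Fs A = i := mem_filter.mp hA
    have hA2 : A ∈ F ∧ A ∩ H = ∅ := mem_filter.mp hA1.1
    intro x hx
    rw [hY', mem_sdiff]
    refine ⟨hsat.1 _ hA2.1 hx, fun hxH => ?_⟩
    have : x ∈ A ∩ H := mem_inter.mpr ⟨hx, hxH⟩
    rw [hA2.2] at this
    exact notMem_empty x this
  have hAicard : ∀ A ∈ Ai, i - 1 ≤ A.card := by
    intro A hA
    have hA1 : A ∈ Fs ∧ hB Fs A = i := mem_filter.mp hA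
    have hch : ChB Fs A i := hA1.2 ▸ hB_spec Fs A
    obtain ⟨C, hC1, hC2, hC3⟩ := hch
    have hi1 : i - 1 < i := by omega
    have h1 := card_ge_of_strictMono hC1 (i - 1) hi1
    have h2 := card_le_card (hC3 ⟨i - 1, hi1⟩)
    omega
  have hbound1 : (Y'.powerset.filter fun T => ∃ A ∈ Ai, A ⊆ T).card ≤
      Ai.card * 2 ^ (N - (i - 1)) := by
    calc (Y'.powerset.filter fun T => ∃ A ∈ Ai, A ⊆ T).card
        ≤ (Ai.biUnion fun A => Y'.powerset.filter fun T => A ⊆ T).card := card_le_card hsub1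
    _ ≤ ∑ A ∈ Ai, (Y'.powerset.filter fun T => A ⊆ T).card := card_biUnion_le
    _ ≤ ∑ _A ∈ Ai, 2 ^ (N - (i - 1)) := by
        refine Finset.sum_le_sum fun A hA => ?_
        rw [card_filter_sup (hAiY A hA)]
        exact Nat.pow_le_pow_right (by norm_num)
          (Nat.sub_le_sub_left (hAicard A hA) _)
    _ = Ai.card * 2 ^ (N - (i - 1)) := by rw [Finset.sum_const, smul_eq_mul]
  -- second filter bound
  have hsub2 : (Y'.powerset.filter fun T => ∃ B ∈ Bj, T ⊆ B) ⊆
      Bj.biUnion fun B => Y'.powerset.filter fun T => T ⊆ B := by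
    intro T hT
    rw [mem_filter] at hT
    obtain ⟨B, hB1, hB2⟩ := hT.2
    exact mem_biUnion.mpr ⟨B, hB1, mem_filter.mpr ⟨hT.1, hB2⟩⟩
  have hBjcard : ∀ B ∈ Bj, (Y' ∩ B).card ≤ N - (j - 1) := by
    intro B hB
    have hB1 : B ∈ Fl ∧ hA Fl B = j := mem_filter.mp hB
    have hB2 : B ∈ F ∧ H ⊆ B := mem_filter.mp hB1.1
    have hch : ChA Fl B j := hB1.2 ▸ hA_spec Fl B
    obtain ⟨C, hC1, hC2, hC3⟩ := hch
    have hHB : H ⊆ B := hB2.2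
    have hBF : B ∈ F := hB2.1
    -- B ⊆ C 0 and |C (j-1)| ≤ n
    have hj0 : 0 < j := by omega
    have hj1 : j - 1 < j := by omega
    have hc0 : B.card ≤ (C ⟨0, hj0⟩).card := card_le_card (hC3 ⟨0, hj0⟩)
    have hgrow : (C ⟨0, hj0⟩).card + (j - 1) ≤ (C ⟨j - 1, hj1⟩).card :=
      card_ge_of_strictMono' hC1 hj0 (j - 1) hj1
    have htop : (C ⟨j - 1, hj1⟩).card ≤ n := by
      have hX : C ⟨j - 1, hj1⟩ ⊆ Finset.Icc 1 n := by
        have hmem : C ⟨j - 1, hj1⟩ ∈ F ∧ H ⊆ C ⟨j - 1, hj1⟩ :=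
          mem_filter.mp (hC2 ⟨j - 1, hj1⟩)
        exact hsat.1 _ hmem.1
      have h5 := card_le_card hX
      rwa [Nat.card_Icc, Nat.add_sub_cancel] at h5
    have hBcard : B.card + (j - 1) ≤ n := by omega
    -- Y' ∩ B = B \ H
    have hYB : Y' ∩ B = B \ H := by
      ext x
      rw [mem_inter, hY', mem_sdiff, mem_sdiff]
      constructor
      · rintro ⟨⟨h1, h2⟩, h3⟩
        exact ⟨h3, h2⟩
      · rintro ⟨h1, h2⟩
        exact ⟨⟨hsat.1 _ hBF h1, h2⟩, h1⟩
    have hBH : (B \ H).card = B.card - 2 := by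
      rw [card_sdiff_of_subset hHB, hHcard]
    have h2B : 2 ≤ B.card := by
      have := card_le_card hHB
      omega
    rw [hYB, hBH, hNval]
    omega
  have hbound2 : (Y'.powerset.filter fun T => ∃ B ∈ Bj, T ⊆ B).card ≤
      Bj.card * 2 ^ (N - (j - 1)) := by
    calc (Y'.powerset.filter fun T => ∃ B ∈ Bj, T ⊆ B).card
        ≤ (Bj.biUnion fun B => Y'.powerset.filter fun T => T ⊆ B).card := card_le_card hsub2
    _ ≤ ∑ B ∈ Bj, (Y'.powerset.filter fun T => T ⊆ B).card := card_biUnion_le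
    _ ≤ ∑ _B ∈ Bj, 2 ^ (N - (j - 1)) := by
        refine Finset.sum_le_sum fun B hB => ?_
        rw [card_filter_sub Y' B]
        exact Nat.pow_le_pow_right (by norm_num) (hBjcard B hB)
    _ = Bj.card * 2 ^ (N - (j - 1)) := by rw [Finset.sum_const, smul_eq_mul]
  -- conclude
  have hiN : min i j - 1 ≤ N := by
    have : min i j ≤ k := by omega
    rw [hNval]
    omega
  exact level_count hi hj hiN (hstep1.trans (Nat.add_le_add hbound1 hbound2))

theorem gerbner_lower_bound :
    ∀ k : ℕ, 1 ≤ k → ∃ n₀ : ℕ, ∀ n : ℕ, n₀ ≤ n →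
      ∀ F : Finset (Finset ℕ), IsSatKSperner (Finset.Icc 1 n) F k →
        (2 : ℝ) ^ (((k : ℝ) - 1) / 2) ≤ F.card := by
  intro k hk
  refine ⟨2 ^ 2 ^ k, fun n hn F hsat => ?_⟩
  have hcardIcc : (Finset.Icc 1 n).card = n := by
    rw [Nat.card_Icc]; omega
  by_cases hhom : ∃ a ∈ Finset.Icc 1 n, ∃ b ∈ Finset.Icc 1 n, a ≠ b ∧
      ∀ A ∈ F, (a ∈ A ↔ b ∈ A)
  · -- homogeneous pair exists
    obtain ⟨a, ha, b, hb, hab, htr⟩ := hhom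
    have hkn : k ≤ n - 1 := by
      have h1 : k < 2 ^ k := Nat.lt_two_pow_self
      have h2 : 2 ^ k ≤ 2 ^ 2 ^ k := Nat.pow_le_pow_right (by norm_num) (le_of_lt h1)
      omega
    set Fs := smallSets F ({a, b} : Finset ℕ) with hFs
    set Fl := largeSets F ({a, b} : Finset ℕ) with hFl
    have hdisjAB : ∀ i j : ℕ, Disjoint (Fs.filter fun A => hB Fs A = i)
        (Fl.filter fun B => hA Fl B = j) := by
      intro i j
      rw [Finset.disjoint_left]
      intro A hA1 hA2
      have h1 : A ∈ F ∧ A ∩ ({a, b} : Finset ℕ) = ∅ := mem_filter.mp (mem_filter.mp hA1).1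
      have h2 : A ∈ F ∧ ({a, b} : Finset ℕ) ⊆ A := mem_filter.mp (mem_filter.mp hA2).1
      have haA : a ∈ A := h2.2 (by simp)
      have : a ∈ A ∩ ({a, b} : Finset ℕ) := mem_inter.mpr ⟨haA, by simp⟩
      rw [h1.2] at this
      exact notMem_empty a this
    have hsubF : ∀ i j : ℕ,
        (Fs.filter fun A => hB Fs A = i) ∪ (Fl.filter fun B => hA Fl B = j) ⊆ F := by
      intro i j
      refine union_subset ?_ ?_
      · exact (filter_subset _ _).trans (filter_subset _ _)
      · exact (filter_subset _ _).trans (filter_subset _ _)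
    have hXY : ∀ i j : ℕ,
        (Fs.filter fun A => hB Fs A = i).card + (Fl.filter fun B => hA Fl B = j).card ≤
          F.card := by
      intro i j
      rw [← card_union_of_disjoint (hdisjAB i j)]
      exact card_le_card (hsubF i j)
    rcases Nat.even_or_odd k with he | ho
    · -- k even, k = m + m with m ≥ 1
      obtain ⟨m, hm⟩ := he
      have hm1 : 1 ≤ m := by omega
      have hlev1 := main_level hsat ha hb hab htr hkn (i := m) (j := m + 1)
        (by omega) (by omega) (by omega)
      have hlev2 := main_level hsat ha hb hab htr hkn (i := m + 1) (j := m)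
        (by omega) (by omega) (by omega)
      rw [← hFs, ← hFl] at hlev1 hlev2
      rw [show min m (m + 1) = m by omega] at hlev1
      rw [show min (m + 1) m = m by omega] at hlev2
      -- four pairwise disjoint pieces
      set A1 := Fs.filter (fun A => hB Fs A = m) with hA1d
      set A2 := Fs.filter (fun A => hB Fs A = m + 1) with hA2d
      set B1 := Fl.filter (fun B => hA Fl B = m) with hB1d
      set B2 := Fl.filter (fun B => hA Fl B = m + 1) with hB2d
      have hdA : Disjoint A1 A2 := by
        rw [Finset.disjoint_left]
        intro A h1 h2
        have e1 := (mem_filter.mp h1).2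
        have e2 := (mem_filter.mp h2).2
        omega
      have hdB : Disjoint B1 B2 := by
        rw [Finset.disjoint_left]
        intro A h1 h2
        have e1 := (mem_filter.mp h1).2
        have e2 := (mem_filter.mp h2).2
        omega
      have hdAB : Disjoint (A1 ∪ A2) (B1 ∪ B2) := by
        rw [Finset.disjoint_union_left]
        constructor
        · rw [Finset.disjoint_union_right]
          exact ⟨hdisjAB m m, hdisjAB m (m + 1)⟩
        · rw [Finset.disjoint_union_right]
          exact ⟨hdisjAB (m + 1) m, hdisjAB (m + 1) (m + 1)⟩
      have hsub4 : (A1 ∪ A2) ∪ (B1 ∪ B2) ⊆ F := by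
        refine union_subset (union_subset ?_ ?_) (union_subset ?_ ?_) <;>
          exact (filter_subset _ _).trans (filter_subset _ _)
      have hcard4 : A1.card + A2.card + B1.card + B2.card ≤ F.card := by
        have h1 := card_le_card hsub4
        rw [card_union_of_disjoint hdAB, card_union_of_disjoint hdA,
          card_union_of_disjoint hdB] at h1
        omega
      have hposm : 2 ^ (m - 1) + 2 ^ (m - 1) = 2 ^ m := by
        have h2 : m - 1 + 1 = m := by omega
        calc 2 ^ (m - 1) + 2 ^ (m - 1) = 2 ^ (m - 1) * 2 := by ring
        _ = 2 ^ (m - 1 + 1) := (pow_succ 2 (m - 1)).symm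
        _ = 2 ^ m := by rw [h2]
      have hfin : 2 ^ m ≤ F.card := by omega
      have hreal : ((2 : ℕ) ^ m : ℝ) ≤ (F.card : ℝ) := by exact_mod_cast hfin
      calc (2 : ℝ) ^ (((k : ℝ) - 1) / 2) ≤ (2 : ℝ) ^ ((m : ℕ) : ℝ) := by
            apply Real.rpow_le_rpow_of_exponent_le (by norm_num)
            have hkr : (k : ℝ) = 2 * (m : ℝ) := by
              rw [hm]; push_cast; ring
            rw [hkr]
            linarith
      _ = ((2 : ℕ) ^ m : ℝ) := by
            rw [Real.rpow_natCast]; push_cast; ring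
      _ ≤ (F.card : ℝ) := hreal
    · -- k odd, k = 2m + 1
      obtain ⟨m, hm⟩ := ho
      have hlev := main_level hsat ha hb hab htr hkn (i := m + 1) (j := m + 1)
        (by omega) (by omega) (by omega)
      rw [← hFs, ← hFl] at hlev
      rw [show min (m + 1) (m + 1) = m + 1 by omega] at hlev
      have hfin : 2 ^ m ≤ F.card := by
        have h1 := hXY (m + 1) (m + 1)
        have h2 : m + 1 - 1 = m := by omega
        rw [h2] at hlev
        omega
      have hreal : ((2 : ℕ) ^ m : ℝ) ≤ (F.card : ℝ) := by exact_mod_cast hfin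
      calc (2 : ℝ) ^ (((k : ℝ) - 1) / 2) = (2 : ℝ) ^ ((m : ℕ) : ℝ) := by
            congr 1
            rw [hm]
            push_cast
            ring
      _ = ((2 : ℕ) ^ m : ℝ) := by
            rw [Real.rpow_natCast]; push_cast; ring
      _ ≤ (F.card : ℝ) := hreal
  · -- no homogeneous pair: F is huge
    have hinj : Set.InjOn (fun x => F.filter fun A => x ∈ A) (Finset.Icc 1 n) := by
      intro x hx y hy heq0
      have heq : F.filter (fun A => x ∈ A) = F.filter (fun A => y ∈ A) := heq0
      by_contra hxy
      refine hhom ⟨x, hx, y, hy, hxy, fun A hA => ?_⟩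
      constructor
      · intro hxA
        have : A ∈ F.filter fun A => x ∈ A := mem_filter.mpr ⟨hA, hxA⟩
        rw [heq] at this
        exact (mem_filter.mp this).2
      · intro hyA
        have : A ∈ F.filter fun A => y ∈ A := mem_filter.mpr ⟨hA, hyA⟩
        rw [← heq] at this
        exact (mem_filter.mp this).2
    have hcard : n ≤ 2 ^ F.card := by
      have h1 := Finset.card_le_card_of_injOn (fun x => F.filter fun A => x ∈ A)
        (fun x _ => mem_powerset.mpr (filter_subset _ _)) hinj
      rwa [hcardIcc, card_powerset] at h1
    have hFk : 2 ^ k ≤ F.card := by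
      have h2 : (2 : ℕ) ^ 2 ^ k ≤ 2 ^ F.card := le_trans hn hcard
      exact (Nat.pow_le_pow_iff_right (by norm_num)).mp h2
    have hreal : ((2 : ℕ) ^ k : ℝ) ≤ (F.card : ℝ) := by exact_mod_cast hFk
    calc (2 : ℝ) ^ (((k : ℝ) - 1) / 2) ≤ (2 : ℝ) ^ ((k : ℕ) : ℝ) := by
          apply Real.rpow_le_rpow_of_exponent_le (by norm_num)
          have : (0 : ℝ) ≤ (k : ℝ) := Nat.cast_nonneg k
          linarith
    _ = ((2 : ℕ) ^ k : ℝ) := by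
          rw [Real.rpow_natCast]
          push_cast
          ring
    _ ≤ (F.card : ℝ) := hreal

end Chains
end

section
/- For every integer k ≥ 2 and every integer n ≥ 2k − 2, the family F := {A : A ⊆ [k−2]} ∪ {[n] \ A : A ⊆ [k−2]} is a saturated k-Sperner system in P([n]) of cardinality 2^{k−1}. -/
open Finset

private theorem gerbner_chain_up (A : Finset ℕ) :
    ∃ C : Fin (A.card + 1) → Finset ℕ, StrictMono C ∧ (∀ i, C i ⊆ A) ∧ C (Fin.last _) = A := by
  set l := A.sort (· ≤ ·) with hl
  have hlen : l.length = A.card := Finset.length_sort _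
  have hnd : l.Nodup := Finset.sort_nodup _ _
  have hcard : ∀ i : Fin (A.card + 1), (l.take i.val).toFinset.card = i.val := by
    intro i
    rw [List.toFinset_card_of_nodup (hnd.sublist (List.take_sublist _ _)),
      List.length_take, hlen]
    omega
  have hmono : ∀ i j : Fin (A.card + 1), i ≤ j →
      (l.take i.val).toFinset ⊆ (l.take j.val).toFinset := by
    intro i j hij x hx
    rw [List.mem_toFinset] at *
    have : l.take i.val = (l.take j.val).take i.val := by
      rw [List.take_take]; congr 1; omega
    rw [this] at hx
    exact List.take_subset _ _ hx
  refine ⟨fun i => (l.take i.val).toFinset, ?_, ?_, ?_⟩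
  · intro i j hij
    refine Finset.ssubset_iff_subset_ne.2 ⟨hmono i j hij.le, fun he => ?_⟩
    simp only at he
    have := hcard i; rw [he, hcard j] at this
    exact absurd (Fin.ext this.symm) hij.ne
  · intro i x hx
    rw [List.mem_toFinset] at hx
    have := List.take_subset i.val l hx
    rwa [← Finset.mem_sort (· ≤ ·), ← hl]
  · simp only [Fin.val_last]
    rw [List.take_of_length_le (by omega)]
    rw [hl]; exact Finset.sort_toFinset _ _

private theorem gerbner_smge {m : ℕ} (f : Fin m → ℕ) (hf : StrictMono f) (i j : Fin m)
    (hij : i ≤ j) : f i + (j.val - i.val) ≤ f j := by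
  obtain ⟨j, hj⟩ := j
  have hij' : i.val ≤ j := hij
  induction j with
  | zero =>
    have : i = ⟨0, hj⟩ := Fin.ext (by simp only [Fin.val_mk]; omega)
    subst this; simp
  | succ j ih =>
    rcases Nat.lt_or_ge i.val (j+1) with h | h
    · have hj' : j < m := by omega
      have h1 := ih hj' (by omega : i.val ≤ j)
      have h2 : f ⟨j, hj'⟩ < f ⟨j+1, hj⟩ := hf (by simp [Fin.mk_lt_mk])
      simp only [Fin.val_mk] at h1 h2 ⊢
      omega
    · have : i = ⟨j+1, hj⟩ := Fin.ext (by simp only [Fin.val_mk]; omega)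
      subst this; simp

theorem gerbner_construction (k n : ℕ) (hk : 2 ≤ k) (hn : 2 * k - 2 ≤ n) :
    IsSatKSperner (Finset.Icc 1 n)
      ((Finset.Icc 1 (k - 2)).powerset ∪
        (Finset.Icc 1 (k - 2)).powerset.image (fun A => Finset.Icc 1 n \ A)) k ∧
    ((Finset.Icc 1 (k - 2)).powerset ∪
        (Finset.Icc 1 (k - 2)).powerset.image (fun A => Finset.Icc 1 n \ A)).card =
      2 ^ (k - 1) := by
  set K : Finset ℕ := Finset.Icc 1 (k - 2) with hKdef
  set X : Finset ℕ := Finset.Icc 1 n with hXdef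
  set F : Finset (Finset ℕ) := K.powerset ∪ K.powerset.image (fun A => X \ A) with hFdef
  have hKX : K ⊆ X := Finset.Icc_subset_Icc le_rfl (by omega)
  have hKcard : K.card = k - 2 := by rw [hKdef, Nat.card_Icc]; omega
  have hXcard : X.card = n := by rw [hXdef, Nat.card_Icc]; omega
  have hmemF : ∀ S : Finset ℕ, S ∈ F ↔ S ⊆ K ∨ ∃ B, B ⊆ K ∧ S = X \ B := by
    intro S
    simp only [hFdef, mem_union, mem_powerset, mem_image]
    constructor
    · rintro (h | ⟨B, hB, rfl⟩)
      · exact Or.inl h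
      · exact Or.inr ⟨B, hB, rfl⟩
    · rintro (h | ⟨B, hB, rfl⟩)
      · exact Or.inl h
      · exact Or.inr ⟨B, hB, rfl⟩
  have hsmall_card : ∀ S : Finset ℕ, S ⊆ K → S.card ≤ k - 2 := fun S hS =>
    hKcard ▸ card_le_card hS
  have hlarge_card : ∀ B : Finset ℕ, B ⊆ K → (X \ B).card = n - B.card := by
    intro B hB
    rw [card_sdiff_of_subset (hB.trans hKX), hXcard]
  have hsubX : ∀ S ∈ F, S ⊆ X := by
    intro S hS
    rcases (hmemF S).1 hS with h | ⟨B, _, rfl⟩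
    · exact h.trans hKX
    · exact sdiff_subset
  have hsdiff_anti : ∀ P Q : Finset ℕ, P ⊂ Q → Q ⊆ X → X \ Q ⊂ X \ P := by
    intro P Q hPQ hQX
    refine (ssubset_iff_of_subset (sdiff_subset_sdiff Subset.rfl hPQ.subset)).2 ?_
    obtain ⟨x, hxQ, hxP⟩ := exists_of_ssubset hPQ
    exact ⟨x, mem_sdiff.2 ⟨hQX hxQ, hxP⟩, fun hx => (mem_sdiff.1 hx).2 hxQ⟩
  refine ⟨⟨hsubX, ?_, ?_⟩, ?_⟩
  · -- no chain of length k+1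
    rintro ⟨C, hC, hm⟩
    have hfc : StrictMono (fun i => (C i).card) := fun i j hij => card_lt_card (hC hij)
    set T : Finset (Fin (k+1)) := univ.filter (fun i => ¬ C i ⊆ K) with hT
    rcases eq_empty_or_nonempty T with hTe | hTne
    · -- all small
      have hall : ∀ i, C i ⊆ K := by
        intro i
        by_contra h
        exact (eq_empty_iff_forall_notMem.1 hTe i) (mem_filter.2 ⟨mem_univ _, h⟩)
      have h1 := gerbner_smge _ hfc 0 (Fin.last k) (Fin.zero_le _)
      have h2 := hsmall_card _ (hall (Fin.last k))
      simp only [Fin.val_last, Fin.val_zero] at h1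
      omega
    · set s : Fin (k+1) := T.min' hTne with hs
      have hsT : s ∈ T := T.min'_mem hTne
      have hsK : ¬ C s ⊆ K := (mem_filter.1 hsT).2
      obtain ⟨B, hBK, hCs⟩ : ∃ B, B ⊆ K ∧ C s = X \ B := by
        rcases (hmemF _).1 (hm s) with h | h
        · exact absurd h hsK
        · exact h
      have hb : B.card ≤ k - 2 := hsmall_card _ hBK
      have hCscard : (C s).card = n - B.card := by rw [hCs]; exact hlarge_card _ hBK
      have hfk : (C (Fin.last k)).card ≤ n := hXcard ▸ card_le_card (hsubX _ (hm _))
      have h1 := gerbner_smge _ hfc s (Fin.last k) (Fin.le_last s)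
      simp only [Fin.val_last] at h1
      have hks : k - s.val ≤ B.card := by omega
      rcases Nat.eq_zero_or_pos s.val with hs0 | hs1
      · omega
      · set p : Fin (k+1) := ⟨s.val - 1, by omega⟩ with hp
        have hpls : p < s := by rw [Fin.lt_def, hp]; simp only [Fin.val_mk]; omega
        have hpK : C p ⊆ K := by
          by_contra h
          exact absurd (T.min'_le p (mem_filter.2 ⟨mem_univ _, h⟩)) (not_le.2 hpls)
        have hAcard := gerbner_smge _ hfc 0 p (Fin.zero_le _)
        simp only [Fin.val_zero, Fin.val_mk] at hAcard
        have hps : C p ⊂ C s := hC hpls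
        have hdisj : Disjoint (C p) B := by
          rw [disjoint_left]
          intro x hx hxB
          have : x ∈ C s := hps.subset hx
          rw [hCs, mem_sdiff] at this
          exact this.2 hxB
        have hunion : C p ∪ B ⊆ K := union_subset hpK hBK
        have hcu : (C p).card + B.card ≤ k - 2 := by
          rw [← card_union_of_disjoint hdisj]
          exact hsmall_card _ hunion
        have hsk : s.val ≤ k := by omega
        have hpv : p.val = s.val - 1 := rfl
        omega
  · -- saturation
    intro S hSX hSF
    set A : Finset ℕ := S ∩ K with hA
    set B : Finset ℕ := K \ S with hB
    have hAK : A ⊆ K := inter_subset_right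
    have hBK : B ⊆ K := sdiff_subset
    have hABd : Disjoint A B := by
      rw [disjoint_left]
      intro x hx hxB
      exact (mem_sdiff.1 hxB).2 (mem_inter.1 hx).1
    have hABu : A ∪ B = K := by
      ext x
      simp only [hA, hB, mem_union, mem_inter, mem_sdiff]
      tauto
    have hab : A.card + B.card = k - 2 := by
      rw [← card_union_of_disjoint hABd, hABu, hKcard]
    obtain ⟨CA, hCA, hCAsub, hCAlast⟩ := gerbner_chain_up A
    obtain ⟨CB, hCB, hCBsub, hCBlast⟩ := gerbner_chain_up B
    have hconv : ∀ i : Fin (k+1), ¬ i.val ≤ A.card → i.val ≠ A.card + 1 →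
        k - i.val < B.card + 1 := by intro i h1 h2; have := i.isLt; omega
    set D : Fin (k+1) → Finset ℕ := fun i =>
      if h : i.val ≤ A.card then CA ⟨i.val, by omega⟩
      else if h2 : i.val = A.card + 1 then S
      else X \ CB ⟨k - i.val, hconv i h h2⟩ with hD
    refine ⟨D, ?_, ?_⟩
    · rw [Fin.strictMono_iff_lt_succ]
      intro i
      have hik : i.val < k := i.isLt
      simp only [hD, Fin.coe_castSucc, Fin.val_succ]
      rcases Nat.lt_or_ge i.val A.card with h1 | h1
      · rw [dif_pos h1.le, dif_pos (show i.val + 1 ≤ A.card from h1)]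
        refine hCA ?_
        exact Fin.mk_lt_mk.2 (by omega)
      rcases Nat.eq_or_lt_of_le h1 with h2 | h2
      · -- i.val = A.card : CA last = A ⊂ S
        rw [dif_pos (le_of_eq h2.symm), dif_neg (show ¬ i.val + 1 ≤ A.card by omega),
          dif_pos (show i.val + 1 = A.card + 1 by omega)]
        have heq : ∀ hp : i.val < A.card + 1, CA ⟨i.val, hp⟩ = A := by
          intro hp
          rw [show (⟨i.val, hp⟩ : Fin (A.card + 1)) = Fin.last A.card from
            Fin.ext (by simp only [Fin.val_mk, Fin.val_last]; omega), hCAlast]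
        rw [heq]
        refine Finset.ssubset_iff_subset_ne.2 ⟨inter_subset_left, fun he => ?_⟩
        exact hSF ((hmemF S).2 (Or.inl (he ▸ hAK)))
      rcases Nat.eq_or_lt_of_le h2 with h3 | h3
      · -- i.val = A.card + 1 : S ⊂ X \ B
        rw [dif_neg (show ¬ i.val ≤ A.card by omega),
          dif_pos (show i.val = A.card + 1 by omega),
          dif_neg (show ¬ i.val + 1 ≤ A.card by omega),
          dif_neg (show ¬ i.val + 1 = A.card + 1 by omega)]
        have hbv : ∀ hp : k - (i.val + 1) < B.card + 1, CB ⟨k - (i.val + 1), hp⟩ = B := by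
          intro hp
          rw [show (⟨k - (i.val + 1), hp⟩ : Fin (B.card + 1)) = Fin.last B.card from
            Fin.ext (by simp only [Fin.val_mk, Fin.val_last]; omega), hCBlast]
        rw [hbv]
        refine Finset.ssubset_iff_subset_ne.2 ⟨?_, fun he => ?_⟩
        · rw [subset_sdiff]
          refine ⟨hSX, ?_⟩
          rw [disjoint_left]
          intro x hx hxB
          exact (mem_sdiff.1 hxB).2 hx
        · exact hSF ((hmemF S).2 (Or.inr ⟨B, hBK, he⟩))
      · -- i.val ≥ A.card + 2 : complements
        rw [dif_neg (show ¬ i.val ≤ A.card by omega),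
          dif_neg (show ¬ i.val = A.card + 1 by omega),
          dif_neg (show ¬ i.val + 1 ≤ A.card by omega),
          dif_neg (show ¬ i.val + 1 = A.card + 1 by omega)]
        refine hsdiff_anti _ _ (hCB ?_) ((hCBsub _).trans (hBK.trans hKX))
        exact Fin.mk_lt_mk.2 (by omega)
    · intro i
      simp only [hD]
      split_ifs with h h2
      · exact mem_insert_of_mem ((hmemF _).2 (Or.inl ((hCAsub _).trans hAK)))
      · exact mem_insert_self _ _
      · exact mem_insert_of_mem ((hmemF _).2 (Or.inr ⟨_, (hCBsub _).trans hBK, rfl⟩))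
  · -- cardinality
    have hdisj : Disjoint K.powerset (K.powerset.image (fun A => X \ A)) := by
      rw [disjoint_left]
      intro S hS hS'
      obtain ⟨B, hB, rfl⟩ := mem_image.1 hS'
      rw [mem_powerset] at hS hB
      have h1 := hsmall_card _ hS
      have h2 := hlarge_card _ hB
      have h3 := hsmall_card _ hB
      omega
    have hinj : Set.InjOn (fun A => X \ A) ↑K.powerset := by
      intro B1 h1 B2 h2 he
      simp only [coe_powerset, Set.mem_preimage, Set.mem_powerset_iff, coe_subset] at h1 h2
      simp only at he
      have e1 : X \ (X \ B1) = B1 := Finset.sdiff_sdiff_eq_self (h1.trans hKX)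
      have e2 : X \ (X \ B2) = B2 := Finset.sdiff_sdiff_eq_self (h2.trans hKX)
      rw [← e1, ← e2, he]
    rw [hFdef, card_union_of_disjoint hdisj, card_image_of_injOn hinj,
      card_powerset, hKcard]
    have hexp : k - 1 = (k - 2) + 1 := by omega
    rw [hexp, pow_succ, mul_two]
end
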